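/- arXiv:1412.1523 — 2 statements merged into one kernel-verified Lean document; each statement's English description precedes it below -/
import Mathlib

section
/- Let A be a weakly-connected combination matrix, M ≥ 1, and w₁⋆, …, w_S⋆ ∈ ℝ^M arbitrary vectors. Define 𝒲⋆ ∈ ℝ^{N_gS·M} as the stacked vector with blocks 1_{N_s} ⊗ w_s⋆ for s = 1,…,S, define 𝒲• := (W ⊗ I_M)ᵀ 𝒲⋆ ∈ ℝ^{N_gR·M}, and let 𝒲_∞ := [𝒲⋆; 𝒲•] ∈ ℝ^{N·M}. Then 𝒲_∞ is a fixed point of (A ⊗ I_M)ᵀ, i.e. (A ⊗ I_M)ᵀ 𝒲_∞ = 𝒲_∞. -/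
open Matrix Filter

noncomputable section

/-- The set of agents of a network made of `S + R` sub-networks of sizes `Nsz b`:
an agent is a pair of a sub-network index and an index within that sub-network. -/
abbrev Agent (S R : ℕ) (Nsz : Fin (S + R) → ℕ) := (b : Fin (S + R)) × Fin (Nsz b)

/-- The `b`-th diagonal block of a combination matrix. -/
def diagBlock {S R : ℕ} {Nsz : Fin (S + R) → ℕ}
    (A : Matrix (Agent S R Nsz) (Agent S R Nsz) ℝ) (b : Fin (S + R)) :
    Matrix (Fin (Nsz b)) (Fin (Nsz b)) ℝ :=
  Matrix.of fun i j => A ⟨b, i⟩ ⟨b, j⟩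

/-- Agents belonging to the sending group `S` (the first `S` sub-networks). -/
abbrev SIdx (S R : ℕ) (Nsz : Fin (S + R) → ℕ) := {x : Agent S R Nsz // x.1.val < S}

/-- Agents belonging to the receiving group `R` (the last `R` sub-networks). -/
abbrev RIdx (S R : ℕ) (Nsz : Fin (S + R) → ℕ) := {x : Agent S R Nsz // S ≤ x.1.val}

/-- The block `T_SR` of a combination matrix (weights from `S`-agents to `R`-agents). -/
def TSR {S R : ℕ} {Nsz : Fin (S + R) → ℕ}
    (A : Matrix (Agent S R Nsz) (Agent S R Nsz) ℝ) :
    Matrix (SIdx S R Nsz) (RIdx S R Nsz) ℝ :=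
  Matrix.of fun x y => A x.1 y.1

/-- The block `T_RR` of a combination matrix (weights internal to the `R`-group). -/
def TRR {S R : ℕ} {Nsz : Fin (S + R) → ℕ}
    (A : Matrix (Agent S R Nsz) (Agent S R Nsz) ℝ) :
    Matrix (RIdx S R Nsz) (RIdx S R Nsz) ℝ :=
  Matrix.of fun x y => A x.1 y.1

/-- The matrix `W = T_SR (I - T_RR)⁻¹`. -/
def Wmat {S R : ℕ} {Nsz : Fin (S + R) → ℕ}
    (A : Matrix (Agent S R Nsz) (Agent S R Nsz) ℝ) :
    Matrix (SIdx S R Nsz) (RIdx S R Nsz) ℝ :=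
  TSR A * (1 - TRR A)⁻¹

/-- A "weakly-connected combination matrix": a left-stochastic nonnegative matrix, block
upper-triangular, whose first `S` diagonal blocks are primitive (some power is entrywise
positive) and whose last `R` diagonal blocks are irreducible with all column sums at most
one and at least one column sum strictly less than one (the column-sum conditions on the
`R`-blocks follow from left-stochasticity except for the strict one, which is stated). -/
structure IsWeaklyConnected {S R : ℕ} {Nsz : Fin (S + R) → ℕ}
    (A : Matrix (Agent S R Nsz) (Agent S R Nsz) ℝ) : Prop where
  S_pos : 1 ≤ S
  R_pos : 1 ≤ R
  Nsz_pos : ∀ b, 1 ≤ Nsz b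
  nonneg : ∀ x y, 0 ≤ A x y
  colsum : ∀ y, ∑ x, A x y = 1
  SS_blockdiag : ∀ x y : Agent S R Nsz, y.1.val < S → x.1 ≠ y.1 → A x y = 0
  blockUpper : ∀ x y : Agent S R Nsz, y.1.val < x.1.val → A x y = 0
  primitive : ∀ b : Fin (S + R), b.val < S →
    ∃ m : ℕ, 1 ≤ m ∧ ∀ i j, 0 < ((diagBlock A b) ^ m) i j
  irreducible : ∀ b : Fin (S + R), S ≤ b.val →
    ∀ i j, ∃ m : ℕ, 1 ≤ m ∧ 0 < ((diagBlock A b) ^ m) i j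
  colsum_lt : ∀ b : Fin (S + R), S ≤ b.val → ∃ j, ∑ i, diagBlock A b i j < 1

/-- `p` is the family of Perron eigenvectors of the first `S` diagonal blocks. -/
def IsPerronFamily {S R : ℕ} {Nsz : Fin (S + R) → ℕ}
    (A : Matrix (Agent S R Nsz) (Agent S R Nsz) ℝ)
    (p : (b : Fin (S + R)) → Fin (Nsz b) → ℝ) : Prop :=
  ∀ b : Fin (S + R), b.val < S →
    (∀ i, 0 < p b i) ∧ (∑ i, p b i = 1) ∧ (diagBlock A b).mulVec (p b) = p b

end


lemma entry_pow_nonneg {n : ℕ} {B : Matrix (Fin n) (Fin n) ℝ}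
    (h : ∀ i j, 0 ≤ B i j) : ∀ m i j, 0 ≤ (B ^ m) i j := by
  intro m
  induction m with
  | zero => intro i j; simp [Matrix.one_apply]; split <;> norm_num
  | succ m ih =>
    intro i j
    rw [pow_succ, Matrix.mul_apply]
    exact Finset.sum_nonneg fun k _ => mul_nonneg (ih i k) (h k j)

lemma block_zero {n : ℕ} {B : Matrix (Fin n) (Fin n) ℝ}
    (hnn : ∀ i j, 0 ≤ B i j)
    (hcol : ∀ j, ∑ i, B i j ≤ 1)
    (j₀ : Fin n) (hj₀ : ∑ i, B i j₀ < 1)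
    (hirr : ∀ i j, ∃ m, 1 ≤ m ∧ 0 < (B ^ m) i j)
    (u : Fin n → ℝ) (hu : ∀ i, 0 ≤ u i)
    (hle : ∀ i, u i ≤ B.mulVec u i) : u = 0 := by
  have hBsum : ∑ i, B.mulVec u i = ∑ j, (∑ i, B i j) * u j := by
    simp only [Matrix.mulVec, dotProduct]
    rw [Finset.sum_comm]
    exact Finset.sum_congr rfl fun j _ => (Finset.sum_mul _ _ _).symm
  have h1 : ∑ j, (∑ i, B i j) * u j ≤ ∑ j, u j :=
    Finset.sum_le_sum fun j _ => by
      calc (∑ i, B i j) * u j ≤ 1 * u j :=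
            mul_le_mul_of_nonneg_right (hcol j) (hu j)
        _ = u j := one_mul _
  have h2 : ∑ i, u i ≤ ∑ i, B.mulVec u i := Finset.sum_le_sum fun i _ => hle i
  have heq : ∑ i, u i = ∑ i, B.mulVec u i := le_antisymm h2 (by rw [hBsum]; exact h1)
  -- pointwise equality
  have hfix : ∀ i, u i = B.mulVec u i := by
    intro i
    by_contra hne
    have hlt : u i < B.mulVec u i := lt_of_le_of_ne (hle i) hne
    have : ∑ i, u i < ∑ i, B.mulVec u i :=
      Finset.sum_lt_sum (fun i _ => hle i) ⟨i, Finset.mem_univ i, hlt⟩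
    exact absurd heq (ne_of_lt this)
  -- u j₀ = 0
  have heq2 : ∑ j, (∑ i, B i j) * u j = ∑ j, u j := by
    rw [← hBsum, ← heq]
  have hterm : (∑ i, B i j₀) * u j₀ = u j₀ := by
    by_contra hne
    have hlt : (∑ i, B i j₀) * u j₀ < u j₀ :=
      lt_of_le_of_ne (by
        calc (∑ i, B i j₀) * u j₀ ≤ 1 * u j₀ :=
              mul_le_mul_of_nonneg_right (hcol j₀) (hu j₀)
          _ = u j₀ := one_mul _) hne
    have : ∑ j, (∑ i, B i j) * u j < ∑ j, u j :=
      Finset.sum_lt_sum (fun j _ => by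
        calc (∑ i, B i j) * u j ≤ 1 * u j :=
              mul_le_mul_of_nonneg_right (hcol j) (hu j)
          _ = u j := one_mul _) ⟨j₀, Finset.mem_univ _, hlt⟩
    exact absurd heq2 (ne_of_lt this)
  have huj₀ : u j₀ = 0 := by
    rcases mul_eq_mul_right_iff.mp (by rw [hterm, one_mul] : (∑ i, B i j₀) * u j₀ = 1 * u j₀) with h | h
    · exact absurd h (ne_of_lt hj₀)
    · exact h
  -- powers fix u
  have hpow : ∀ m, (B ^ m).mulVec u = u := by
    intro m
    induction m with
    | zero => simp
    | succ m ih =>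
      rw [pow_succ', ← Matrix.mulVec_mulVec, ih]
      exact funext fun i => (hfix i).symm
  funext j
  rcases hirr j₀ j with ⟨m, _, hm⟩
  have h0 : ∑ l, (B ^ m) j₀ l * u l = 0 := by
    have := congrFun (hpow m) j₀
    rw [Matrix.mulVec, dotProduct] at this
    rw [this, huj₀]
  have hge : (B ^ m) j₀ j * u j ≤ ∑ l, (B ^ m) j₀ l * u l :=
    Finset.single_le_sum (fun l _ => mul_nonneg (entry_pow_nonneg hnn m j₀ l) (hu l))
      (Finset.mem_univ j)
  have hmul : (B ^ m) j₀ j * u j ≤ 0 := h0 ▸ hge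
  have hj : u j ≤ 0 := by nlinarith [hu j]
  exact le_antisymm hj (hu j)

section Aux
variable {S R : ℕ} {Nsz : Fin (S + R) → ℕ}
  {A : Matrix (Agent S R Nsz) (Agent S R Nsz) ℝ}

lemma diag_colsum_le (hA : IsWeaklyConnected A) (b : Fin (S + R)) (j : Fin (Nsz b)) :
    ∑ i, diagBlock A b i j ≤ 1 := by
  have h := hA.colsum ⟨b, j⟩
  calc ∑ i, diagBlock A b i j ≤ ∑ b' : Fin (S + R), ∑ i, A ⟨b', i⟩ ⟨b, j⟩ := by
        apply Finset.single_le_sum (f := fun b' => ∑ i, A ⟨b', i⟩ ⟨b, j⟩)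
          (fun b' _ => Finset.sum_nonneg fun i _ => hA.nonneg _ _) (Finset.mem_univ b)
    _ = ∑ x : Agent S R Nsz, A x ⟨b, j⟩ := by rw [← Finset.univ_sigma_univ, Finset.sum_sigma]
    _ = 1 := h

lemma trr_fixed_zero (hA : IsWeaklyConnected A)
    (v : RIdx S R Nsz → ℝ) (hv : (TRR A).mulVec v = v) : v = 0 := by
  classical
  set u : RIdx S R Nsz → ℝ := fun x => |v x| with hu_def
  have hu0 : ∀ x, 0 ≤ u x := fun x => abs_nonneg _
  have hule : ∀ x, u x ≤ (TRR A).mulVec u x := by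
    intro x
    calc u x = |(TRR A).mulVec v x| := by rw [hv]
      _ ≤ ∑ y, |TRR A x y * v y| := Finset.abs_sum_le_sum_abs _ _
      _ = ∑ y, TRR A x y * u y := Finset.sum_congr rfl fun y _ => by
          rw [abs_mul, abs_of_nonneg (show (0:ℝ) ≤ TRR A x y from hA.nonneg _ _)]
      _ = (TRR A).mulVec u x := rfl
  have key : ∀ k : ℕ, ∀ x : RIdx S R Nsz, S + R - 1 - (x.1.1 : ℕ) ≤ k → u x = 0 := by
    intro k
    induction k using Nat.strong_induction_on with
    | _ k IH =>
    intro x hxk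
    have hb : S ≤ (x.1.1 : ℕ) := x.2
    have hlater : ∀ y : RIdx S R Nsz, (x.1.1 : ℕ) < (y.1.1 : ℕ) → u y = 0 := by
      intro y hy
      have hylt : (y.1.1 : ℕ) < S + R := y.1.1.isLt
      exact IH (S + R - 1 - (y.1.1 : ℕ)) (by omega) y le_rfl
    -- the embedding of block b into RIdx
    set b := x.1.1 with hb_def
    have e_inj : Function.Injective (fun j : Fin (Nsz b) => (⟨⟨b, j⟩, hb⟩ : RIdx S R Nsz)) := by
      intro a c h
      simpa using h
    set e : Fin (Nsz b) ↪ RIdx S R Nsz := ⟨_, e_inj⟩ with he_def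
    set ub : Fin (Nsz b) → ℝ := fun i => u ⟨⟨b, i⟩, hb⟩ with hub_def
    have hsum : ∀ i : Fin (Nsz b),
        (TRR A).mulVec u ⟨⟨b, i⟩, hb⟩ = (diagBlock A b).mulVec ub i := by
      intro i
      show ∑ y : RIdx S R Nsz, TRR A ⟨⟨b, i⟩, hb⟩ y * u y = _
      rw [← Finset.sum_subset (Finset.subset_univ (Finset.univ.map e))]
      · rw [Finset.sum_map]
        rfl
      · intro y _ hy
        rcases y with ⟨⟨by', iy⟩, hyR⟩
        rcases lt_trichotomy (by' : ℕ) (b : ℕ) with hlt | heq | hgt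
        · have : A ⟨b, i⟩ ⟨by', iy⟩ = 0 := hA.blockUpper _ _ hlt
          show TRR A _ _ * u _ = 0
          rw [show TRR A ⟨⟨b, i⟩, hb⟩ ⟨⟨by', iy⟩, hyR⟩ = A ⟨b, i⟩ ⟨by', iy⟩ from rfl, this,
            zero_mul]
        · exfalso
          have hbb : by' = b := Fin.ext heq
          subst hbb
          exact hy (Finset.mem_map.mpr ⟨iy, Finset.mem_univ _, rfl⟩)
        · have : u ⟨⟨by', iy⟩, hyR⟩ = 0 := hlater _ hgt
          rw [this, mul_zero]
    obtain ⟨j₀, hj₀⟩ := hA.colsum_lt b hb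
    have hub : ub = 0 :=
      block_zero (B := diagBlock A b) (fun i j => hA.nonneg _ _) (diag_colsum_le hA b) j₀ hj₀
        (hA.irreducible b hb) ub (fun i => hu0 _)
        (fun i => by rw [← hsum i]; exact hule _)
    exact congrFun hub x.1.2
  funext x
  have : u x = 0 := key (S + R) x (by omega)
  simpa [hu_def] using this

lemma det_unit (hA : IsWeaklyConnected A) : IsUnit (1 - TRR A).det := by
  classical
  rw [isUnit_iff_ne_zero]
  intro hdet
  obtain ⟨v, hvne, hv⟩ := (Matrix.exists_mulVec_eq_zero_iff).mpr hdet
  apply hvne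
  apply trr_fixed_zero hA
  have := hv
  rw [Matrix.sub_mulVec, Matrix.one_mulVec, sub_eq_zero] at this
  exact this.symm

lemma W_identity (hA : IsWeaklyConnected A) :
    TSR A + Wmat A * TRR A = Wmat A := by
  have h : Wmat A * (1 - TRR A) = TSR A := by
    rw [Wmat, Matrix.mul_assoc, Matrix.nonsing_inv_mul _ (det_unit hA), Matrix.mul_one]
  rw [Matrix.mul_sub, Matrix.mul_one] at h
  rw [← h]
  abel

end Aux

open Kronecker in
lemma kron_trans_mulVec {α β : Type*} [Fintype α] [Fintype β] {M : ℕ}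
    (B : Matrix α β ℝ) (v : α × Fin M → ℝ) (q : β × Fin M) :
    ((B ⊗ₖ (1 : Matrix (Fin M) (Fin M) ℝ)).transpose).mulVec v q
      = ∑ x, B x q.1 * v (x, q.2) := by
  obtain ⟨b, m⟩ := q
  simp [Matrix.mulVec, dotProduct, Fintype.sum_prod_type, Matrix.one_apply,
    mul_ite, ite_mul, mul_zero, zero_mul, mul_one]

section Main
variable {S R : ℕ} {Nsz : Fin (S + R) → ℕ}
  {A : Matrix (Agent S R Nsz) (Agent S R Nsz) ℝ}

lemma agent_sum_split (f : Agent S R Nsz → ℝ) :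
    ∑ y, f y = ∑ s : SIdx S R Nsz, f s.1 + ∑ r : RIdx S R Nsz, f r.1 := by
  classical
  rw [← Fintype.sum_subtype_add_sum_subtype (fun x : Agent S R Nsz => x.1.val < S) f]
  congr 1
  exact Fintype.sum_equiv (Equiv.subtypeEquivRight (fun x => not_lt)) _ _ (fun r => rfl)

end Main


open Kronecker in
/-- **The network limit vector is a fixed point of `(A ⊗ I_M)ᵀ`.**
Let `A` be a weakly-connected combination matrix, `M ≥ 1`, and `w₁⋆, …, w_S⋆ ∈ ℝ^M`
arbitrary vectors.  Let `𝒲⋆` be the stacked vector with blocks `1_{N_s} ⊗ w_s⋆`, let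
`𝒲• := (W ⊗ I_M)ᵀ 𝒲⋆`, and let `𝒲_∞ := [𝒲⋆; 𝒲•]`.  Then `(A ⊗ I_M)ᵀ 𝒲_∞ = 𝒲_∞`. -/
theorem limit_vector_fixed_point
    (S R : ℕ) (Nsz : Fin (S + R) → ℕ)
    (A : Matrix (Agent S R Nsz) (Agent S R Nsz) ℝ)
    (hA : IsWeaklyConnected A)
    (M : ℕ) (hM : 1 ≤ M)
    (wstar : Fin (S + R) → Fin M → ℝ)
    (Wst : SIdx S R Nsz × Fin M → ℝ)
    (hWst : ∀ q, Wst q = wstar q.1.val.1 q.2)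
    (Wbul : RIdx S R Nsz × Fin M → ℝ)
    (hWbul : Wbul = ((Wmat A ⊗ₖ (1 : Matrix (Fin M) (Fin M) ℝ)).transpose).mulVec Wst)
    (Winf : Agent S R Nsz × Fin M → ℝ)
    (hWinf : ∀ q, Winf q =
      if h : q.1.1.val < S then wstar q.1.1 q.2
      else Wbul (⟨q.1, not_lt.mp h⟩, q.2)) :
    ((A ⊗ₖ (1 : Matrix (Fin M) (Fin M) ℝ)).transpose).mulVec Winf = Winf := by
  classical
  have hWb : ∀ (r : RIdx S R Nsz) (m : Fin M),
      Wbul (r, m) = ∑ s : SIdx S R Nsz, Wmat A s r * wstar s.1.1 m := by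
    intro r m
    rw [hWbul, kron_trans_mulVec]
    exact Finset.sum_congr rfl fun s _ => by rw [hWst]
  funext q
  obtain ⟨x, m⟩ := q
  rw [kron_trans_mulVec]
  by_cases hx : x.1.val < S
  · -- S-part
    rw [hWinf]
    simp only [dif_pos hx]
    have hcongr : ∀ y : Agent S R Nsz, A y x * Winf (y, m) = A y x * wstar x.1 m := by
      intro y
      by_cases hy : y.1 = x.1
      · have hy' : y.1.val < S := by rw [hy]; exact hx
        rw [hWinf]
        simp only []
        rw [dif_pos hy', hy]
      · rw [hA.SS_blockdiag y x hx hy, zero_mul, zero_mul]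
    calc ∑ y, A y x * Winf (y, m) = ∑ y, A y x * wstar x.1 m :=
          Finset.sum_congr rfl fun y _ => hcongr y
      _ = (∑ y, A y x) * wstar x.1 m := (Finset.sum_mul _ _ _).symm
      _ = wstar x.1 m := by rw [hA.colsum x, one_mul]
  · -- R-part
    have hx' : S ≤ x.1.val := le_of_not_gt hx
    rw [hWinf]
    simp only [dif_neg hx]
    set w : SIdx S R Nsz → ℝ := fun s => wstar s.1.1 m with hw_def
    set x' : RIdx S R Nsz := ⟨x, le_of_not_gt hx⟩ with hx'_def
    have hsplit := agent_sum_split (fun y => A y x * Winf (y, m))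
    rw [hsplit]
    have hS : ∑ s : SIdx S R Nsz, A s.1 x * Winf (s.1, m)
        = Matrix.vecMul w (TSR A) x' := by
      rw [show Matrix.vecMul w (TSR A) x' = ∑ s, w s * TSR A s x' from rfl]
      refine Finset.sum_congr rfl fun s _ => ?_
      rw [hWinf]
      simp only [dif_pos s.2]
      show A s.1 x * wstar s.1.1 m = w s * TSR A s x'
      rw [mul_comm]
      rfl
    have hRw : ∀ r : RIdx S R Nsz, Wbul (r, m) = Matrix.vecMul w (Wmat A) r := by
      intro r
      rw [hWb]
      rw [show Matrix.vecMul w (Wmat A) r = ∑ s, w s * Wmat A s r from rfl]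
      exact Finset.sum_congr rfl fun s _ => mul_comm _ _
    have hR : ∑ r : RIdx S R Nsz, A r.1 x * Winf (r.1, m)
        = Matrix.vecMul (Matrix.vecMul w (Wmat A)) (TRR A) x' := by
      rw [show Matrix.vecMul (Matrix.vecMul w (Wmat A)) (TRR A) x'
          = ∑ r, Matrix.vecMul w (Wmat A) r * TRR A r x' from rfl]
      refine Finset.sum_congr rfl fun r _ => ?_
      rw [hWinf]
      simp only [dif_neg (not_lt.mpr r.2)]
      have : (⟨r.1, le_of_not_gt (not_lt.mpr r.2)⟩ : RIdx S R Nsz) = r := Subtype.ext rfl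
      rw [this, hRw r, mul_comm]
      rfl
    rw [hS, hR, Matrix.vecMul_vecMul]
    have hadd : (w ᵥ* TSR A) x' + (w ᵥ* (Wmat A * TRR A)) x'
        = (w ᵥ* (TSR A + Wmat A * TRR A)) x' := by
      rw [Matrix.vecMul_add]; rfl
    rw [hadd, W_identity hA, ← hRw x']
end

section
/- Let A be a weakly-connected combination matrix, M ≥ 1, and w₁⋆, …, w_S⋆ ∈ ℝ^M. Define 𝒲⋆, 𝒲• and 𝒲_∞ = [𝒲⋆; 𝒲•] as follows: 𝒲⋆ ∈ ℝ^{N_gS·M} stacks the blocks 1_{N_s} ⊗ w_s⋆, and 𝒲• := (W ⊗ I_M)ᵀ 𝒲⋆. If x ∈ ℝ^{N·M} satisfies x = (A ⊗ I_M)ᵀ x and the top N_gS·M entries of x coincide with 𝒲⋆, then x = 𝒲_∞. In other words, the solution of the linear system x = (A ⊗ I_M)ᵀ x with prescribed top block 𝒲⋆ is unique and equal to 𝒲_∞. -/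
open Matrix Filter

section Aux
open Matrix
variable {S R : ℕ} {Nsz : Fin (S + R) → ℕ}

lemma sum_agent_split (f : Agent S R Nsz → ℝ) :
    ∑ y : Agent S R Nsz, f y = ∑ s : SIdx S R Nsz, f s.1 + ∑ r : RIdx S R Nsz, f r.1 := by
  classical
  rw [← Finset.sum_filter_add_sum_filter_not Finset.univ (fun y => y.1.val < S) f]
  congr 1
  · exact Finset.sum_subtype _ (by simp) f
  · exact Finset.sum_subtype _ (by simp [not_lt]) f

lemma sum_ridx_block (b : Fin (S + R)) (hb : S ≤ b.val) (g : RIdx S R Nsz → ℝ)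
    (h0 : ∀ c : RIdx S R Nsz, c.1.1 ≠ b → g c = 0) :
    ∑ c : RIdx S R Nsz, g c = ∑ j : Fin (Nsz b), g ⟨⟨b, j⟩, hb⟩ := by
  classical
  set e : Fin (Nsz b) → RIdx S R Nsz := fun j => ⟨⟨b, j⟩, hb⟩ with he
  have einj : Function.Injective e := by
    intro j j' h
    have := congrArg (fun c : RIdx S R Nsz => c.1) h
    simpa [he] using this
  have himg : ∑ j : Fin (Nsz b), g (e j) = ∑ c ∈ Finset.image e Finset.univ, g c :=
    (Finset.sum_image (fun j _ j' _ h => einj h)).symm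
  rw [show (∑ j : Fin (Nsz b), g ⟨⟨b, j⟩, hb⟩) = ∑ j : Fin (Nsz b), g (e j) from rfl, himg]
  refine (Finset.sum_subset (Finset.subset_univ _) ?_).symm
  intro c _ hc
  refine h0 c ?_
  intro hcb
  apply hc
  obtain ⟨⟨b', i⟩, hb'⟩ := c
  dsimp at hcb
  subst hcb
  simp only [Finset.mem_image, Finset.mem_univ, true_and]
  exact ⟨i, rfl⟩


lemma block_kernel {A : Matrix (Agent S R Nsz) (Agent S R Nsz) ℝ}
    (hA : IsWeaklyConnected A) (b : Fin (S + R)) (hb : S ≤ b.val)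
    (w : Fin (Nsz b) → ℝ) (hw0 : ∀ i, 0 ≤ w i)
    (hw : (diagBlock A b).mulVec w = w) : w = 0 := by
  classical
  set B := diagBlock A b with hB
  have hBnn : ∀ i j, 0 ≤ B i j := fun i j => hA.nonneg _ _
  have hcol : ∀ j, ∑ i, B i j ≤ 1 := by
    intro j
    have h1 := hA.colsum ⟨b, j⟩
    calc ∑ i, B i j = ∑ i, A ⟨b, i⟩ ⟨b, j⟩ := rfl
      _ ≤ ∑ x : Agent S R Nsz, A x ⟨b, j⟩ := by
          have hsig : ∑ x : Agent S R Nsz, A x ⟨b, j⟩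
              = ∑ b', ∑ i, A ⟨b', i⟩ ⟨b, j⟩ := by
            rw [← Finset.univ_sigma_univ, Finset.sum_sigma]
          rw [hsig]
          exact Finset.single_le_sum
            (f := fun b' => ∑ i, A ⟨b', i⟩ ⟨b, j⟩)
            (fun b' _ => Finset.sum_nonneg fun i _ => hA.nonneg _ _)
            (Finset.mem_univ b)
      _ = 1 := h1
  -- sum identity
  have hsum : ∑ j, (1 - ∑ i, B i j) * w j = 0 := by
    have h1 : ∑ i, w i = ∑ j, (∑ i, B i j) * w j := by
      calc ∑ i, w i = ∑ i, (B.mulVec w) i := by rw [hw]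
        _ = ∑ i, ∑ j, B i j * w j := rfl
        _ = ∑ j, ∑ i, B i j * w j := Finset.sum_comm
        _ = ∑ j, (∑ i, B i j) * w j := by simp [Finset.sum_mul]
    have : ∑ j, (1 - ∑ i, B i j) * w j = ∑ j, w j - ∑ j, (∑ i, B i j) * w j := by
      rw [← Finset.sum_sub_distrib]; congr 1; ext j; ring
    rw [this, ← h1, sub_self]
  have hzero : ∀ j, (1 - ∑ i, B i j) * w j = 0 := by
    have := (Finset.sum_eq_zero_iff_of_nonneg
      (fun j _ => mul_nonneg (by linarith [hcol j]) (hw0 j))).mp hsum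
    exact fun j => this j (Finset.mem_univ j)
  obtain ⟨j0, hj0⟩ := hA.colsum_lt b hb
  have hwj0 : w j0 = 0 := by
    have h := hzero j0
    have : (0:ℝ) < 1 - ∑ i, B i j0 := by
      have : ∑ i, diagBlock A b i j0 = ∑ i, B i j0 := rfl
      linarith [hj0]
    exact (mul_eq_zero.mp h).resolve_left (by linarith)
  have hBpownn : ∀ m i j, 0 ≤ (B ^ m) i j := by
    intro m
    induction m with
    | zero => intro i j; simp [Matrix.one_apply]; positivity
    | succ m ih =>
      intro i j
      rw [pow_succ, Matrix.mul_apply]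
      exact Finset.sum_nonneg fun k _ => mul_nonneg (ih i k) (hBnn k j)
  have hpow : ∀ m, (B ^ m).mulVec w = w := by
    intro m
    induction m with
    | zero => simp
    | succ m ih =>
      rw [pow_succ, ← Matrix.mulVec_mulVec, hw, ih]
  funext j
  obtain ⟨m, hm, hpos⟩ := hA.irreducible b hb j0 j
  have h0 : ∑ k, (B ^ m) j0 k * w k = 0 := by
    have := congrFun (hpow m) j0
    unfold Matrix.mulVec dotProduct at this
    rw [this, hwj0]
  have := (Finset.sum_eq_zero_iff_of_nonneg
    (fun k _ => mul_nonneg (hBpownn m j0 k) (hw0 k))).mp h0 j (Finset.mem_univ j)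
  have hpos' : (0:ℝ) < (B ^ m) j0 j := hpos
  have := (mul_eq_zero.mp this).resolve_left (ne_of_gt hpos')
  simpa using this


lemma kernel_zero {A : Matrix (Agent S R Nsz) (Agent S R Nsz) ℝ}
    (hA : IsWeaklyConnected A) (v : RIdx S R Nsz → ℝ)
    (hv : (TRR A).mulVec v = v) : v = 0 := by
  classical
  set u : RIdx S R Nsz → ℝ := fun r => |v r| with hu_def
  have hTnn : ∀ r c : RIdx S R Nsz, 0 ≤ TRR A r c := fun r c => hA.nonneg _ _
  have hstep1 : ∀ r, u r ≤ ∑ c, TRR A r c * u c := by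
    intro r
    calc u r = |(TRR A).mulVec v r| := by rw [hv]
      _ = |∑ c, TRR A r c * v c| := rfl
      _ ≤ ∑ c, |TRR A r c * v c| := Finset.abs_sum_le_sum_abs _ _
      _ = ∑ c, TRR A r c * u c := by
          refine Finset.sum_congr rfl fun c _ => ?_
          rw [abs_mul, abs_of_nonneg (hTnn r c)]
  have hcolT : ∀ c : RIdx S R Nsz, ∑ r, TRR A r c ≤ 1 := by
    intro c
    have h1 := hA.colsum c.1
    have hsplit := sum_agent_split (fun y => A y c.1)
    have hS : 0 ≤ ∑ s : SIdx S R Nsz, A s.1 c.1 :=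
      Finset.sum_nonneg fun s _ => hA.nonneg _ _
    calc ∑ r, TRR A r c = ∑ r : RIdx S R Nsz, A r.1 c.1 := rfl
      _ ≤ ∑ y : Agent S R Nsz, A y c.1 := by rw [hsplit]; linarith
      _ = 1 := h1
  have hu0 : ∀ r, 0 ≤ u r := fun r => abs_nonneg _
  -- sum argument: equality everywhere
  have hTu : ∀ r, ∑ c, TRR A r c * u c = u r := by
    have hsum_le : ∑ r, (∑ c, TRR A r c * u c) ≤ ∑ r, u r := by
      calc ∑ r, (∑ c, TRR A r c * u c) = ∑ c, (∑ r, TRR A r c) * u c := by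
            rw [Finset.sum_comm]; simp [Finset.sum_mul]
        _ ≤ ∑ c, 1 * u c :=
            Finset.sum_le_sum fun c _ =>
              mul_le_mul_of_nonneg_right (hcolT c) (hu0 c)
        _ = ∑ r, u r := by simp
    have hz : ∑ r, ((∑ c, TRR A r c * u c) - u r) = 0 := by
      have hge : 0 ≤ ∑ r, ((∑ c, TRR A r c * u c) - u r) :=
        Finset.sum_nonneg fun r _ => sub_nonneg.mpr (hstep1 r)
      have hle : ∑ r, ((∑ c, TRR A r c * u c) - u r) ≤ 0 := by
        rw [Finset.sum_sub_distrib]; linarith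
      linarith
    intro r
    have := (Finset.sum_eq_zero_iff_of_nonneg
      (fun r _ => sub_nonneg.mpr (hstep1 r))).mp hz r (Finset.mem_univ r)
    linarith [this]
  -- downward block induction
  have hind : ∀ n : ℕ, ∀ r : RIdx S R Nsz, S + R - r.1.1.val ≤ n → u r = 0 := by
    intro n
    induction n with
    | zero => intro r hr; exact absurd hr (by have := r.1.1.isLt; omega)
    | succ n ih =>
      intro r hr
      obtain ⟨⟨b, i⟩, hb⟩ := r
      simp only at hr hb
      set w : Fin (Nsz b) → ℝ := fun j => u ⟨⟨b, j⟩, hb⟩ with hw_def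
      have hweq : (diagBlock A b).mulVec w = w := by
        funext i'
        have hrow := hTu ⟨⟨b, i'⟩, hb⟩
        have hsum := sum_ridx_block b hb
          (fun c => TRR A ⟨⟨b, i'⟩, hb⟩ c * u c) ?_
        · calc (diagBlock A b).mulVec w i'
              = ∑ j, A ⟨b, i'⟩ ⟨b, j⟩ * u ⟨⟨b, j⟩, hb⟩ := rfl
            _ = ∑ c, TRR A ⟨⟨b, i'⟩, hb⟩ c * u c := hsum.symm
            _ = u ⟨⟨b, i'⟩, hb⟩ := hrow
        · intro c hc
          rcases lt_or_gt_of_ne (fun h : c.1.1.val = b.val => hc (Fin.ext h)) with h | h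
          · have : A ⟨b, i'⟩ c.1 = 0 := hA.blockUpper _ _ h
            simp [TRR, this]
          · have : u c = 0 := ih c (by omega)
            simp [this]
      have hwz : w = 0 := block_kernel hA b hb w (fun j => hu0 _) hweq
      exact congrFun hwz i
  have huz : ∀ r, u r = 0 := fun r => hind (S + R) r (by omega)
  funext r
  exact abs_eq_zero.mp (huz r)

lemma det_ne {A : Matrix (Agent S R Nsz) (Agent S R Nsz) ℝ}
    (hA : IsWeaklyConnected A) : (1 - TRR A).det ≠ 0 := by
  classical
  intro h
  obtain ⟨v, hv0, hv⟩ := Matrix.exists_mulVec_eq_zero_iff.mpr h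
  apply hv0
  apply kernel_zero hA
  have := hv
  rw [Matrix.sub_mulVec, Matrix.one_mulVec, sub_eq_zero] at this
  exact this.symm

end Aux

open Kronecker in
/-- **Uniqueness of the fixed point with prescribed top block.**
Let `A` be a weakly-connected combination matrix, `M ≥ 1`, and `w₁⋆, …, w_S⋆ ∈ ℝ^M`.
Let `𝒲⋆` stack the blocks `1_{N_s} ⊗ w_s⋆`, let `𝒲• := (W ⊗ I_M)ᵀ 𝒲⋆` and
`𝒲_∞ = [𝒲⋆; 𝒲•]`.  If `x` satisfies `x = (A ⊗ I_M)ᵀ x` and the top `N_gS·M` entries of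
`x` coincide with `𝒲⋆`, then `x = 𝒲_∞`. -/
theorem fixed_point_unique
    (S R : ℕ) (Nsz : Fin (S + R) → ℕ)
    (A : Matrix (Agent S R Nsz) (Agent S R Nsz) ℝ)
    (hA : IsWeaklyConnected A)
    (M : ℕ) (hM : 1 ≤ M)
    (wstar : Fin (S + R) → Fin M → ℝ)
    (Wst : SIdx S R Nsz × Fin M → ℝ)
    (hWst : ∀ q, Wst q = wstar q.1.val.1 q.2)
    (Wbul : RIdx S R Nsz × Fin M → ℝ)
    (hWbul : Wbul = ((Wmat A ⊗ₖ (1 : Matrix (Fin M) (Fin M) ℝ)).transpose).mulVec Wst)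
    (x : Agent S R Nsz × Fin M → ℝ)
    (hfix : ((A ⊗ₖ (1 : Matrix (Fin M) (Fin M) ℝ)).transpose).mulVec x = x)
    (htop : ∀ (z : Agent S R Nsz) (h : z.1.val < S) (m : Fin M), x (z, m) = wstar z.1 m) :
    ∀ q : Agent S R Nsz × Fin M, x q =
      if h : q.1.1.val < S then wstar q.1.1 q.2
      else Wbul (⟨q.1, not_lt.mp h⟩, q.2) := by
  classical
  have hfix' : ∀ (z : Agent S R Nsz) (m : Fin M),
      x (z, m) = ∑ y : Agent S R Nsz, A y z * x (y, m) := by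
    intro z m
    have h := congrFun hfix (z, m)
    rw [← h]
    show ∑ p : Agent S R Nsz × Fin M,
        (A ⊗ₖ (1 : Matrix (Fin M) (Fin M) ℝ)) p (z, m) * x p = _
    rw [Fintype.sum_prod_type]
    refine Finset.sum_congr rfl fun y _ => ?_
    simp [Matrix.kroneckerMap_apply, Matrix.one_apply, ite_mul, mul_ite,
      Finset.sum_ite_eq, mul_assoc]
  have hWbul' : ∀ (r : RIdx S R Nsz) (m : Fin M),
      Wbul (r, m) = ∑ s : SIdx S R Nsz, Wmat A s r * Wst (s, m) := by
    intro r m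
    rw [hWbul]
    show ∑ p : SIdx S R Nsz × Fin M,
        (Wmat A ⊗ₖ (1 : Matrix (Fin M) (Fin M) ℝ)) p (r, m) * Wst p = _
    rw [Fintype.sum_prod_type]
    refine Finset.sum_congr rfl fun y _ => ?_
    simp [Matrix.kroneckerMap_apply, Matrix.one_apply, ite_mul, mul_ite,
      Finset.sum_ite_eq, mul_assoc]
  rintro ⟨z, m⟩
  by_cases h : z.1.val < S
  · simp only [dif_pos h]
    exact htop z h m
  · simp only [dif_neg h]
    have hz : S ≤ z.1.val := le_of_not_gt h
    set d : RIdx S R Nsz → ℝ := fun r => x (r.1, m) with hd_def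
    set ws : SIdx S R Nsz → ℝ := fun s => Wst (s, m) with hws_def
    set wb : RIdx S R Nsz → ℝ := fun r => Wbul (r, m) with hwb_def
    have hwb : wb = (Wmat A)ᵀ.mulVec ws := by
      funext r
      rw [hwb_def]
      exact hWbul' r m
    have hdet : IsUnit (1 - TRR A).det := isUnit_iff_ne_zero.mpr (det_ne hA)
    have hexp : ∀ (v : RIdx S R Nsz → ℝ) (r : RIdx S R Nsz),
        (1 - TRR A)ᵀ.mulVec v r = v r - ∑ c, TRR A c r * v c := by
      intro v r
      show ∑ c, (1 - TRR A) c r * v c = _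
      have : ∀ c : RIdx S R Nsz,
          (1 - TRR A) c r * v c
            = (if c = r then v c else 0) - TRR A c r * v c := by
        intro c
        rw [Matrix.sub_apply, Matrix.one_apply, sub_mul]
        by_cases hc : c = r <;> simp [hc]
      rw [Finset.sum_congr rfl fun c _ => this c, Finset.sum_sub_distrib,
        Finset.sum_ite_eq' Finset.univ r v, if_pos (Finset.mem_univ r)]
    have hd : (1 - TRR A)ᵀ.mulVec d = (TSR A)ᵀ.mulVec ws := by
      funext r
      rw [hexp]
      have hrow := hfix' r.1 m
      rw [sum_agent_split (fun y => A y r.1 * x (y, m))] at hrow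
      have hSterm : ∀ s : SIdx S R Nsz,
          A s.1 r.1 * x (s.1, m) = TSR A s r * ws s := by
        intro s
        show A s.1 r.1 * x (s.1, m) = TSR A s r * Wst (s, m)
        rw [htop s.1 s.2 m, hWst]
        rfl
      have : x (r.1, m) = ∑ s : SIdx S R Nsz, TSR A s r * ws s
          + ∑ c : RIdx S R Nsz, TRR A c r * d c := by
        rw [hrow, Finset.sum_congr rfl fun s _ => hSterm s]
        rfl
      show d r - ∑ c, TRR A c r * d c = ∑ s, TSR A s r * ws s
      rw [hd_def]
      simp only []
      rw [this]
      ring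
    have hwbeq : (1 - TRR A)ᵀ.mulVec wb = (TSR A)ᵀ.mulVec ws := by
      rw [hwb, Matrix.mulVec_mulVec, ← Matrix.transpose_mul,
        Wmat, Matrix.nonsing_inv_mul_cancel_right _ _ hdet]
    have hker : (1 - TRR A)ᵀ.mulVec (d - wb) = 0 := by
      rw [Matrix.mulVec_sub, hd, hwbeq, sub_self]
    have hdwb : d = wb := by
      by_contra hne
      have hdz : (1 - TRR A)ᵀ.det = 0 :=
        Matrix.exists_mulVec_eq_zero_iff.mp ⟨d - wb, sub_ne_zero.mpr hne, hker⟩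
      rw [Matrix.det_transpose] at hdz
      exact det_ne hA hdz
    exact congrFun hdwb ⟨z, hz⟩
end
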